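/- The supremum over the nonnegative quadrant of the ℓ∞ operator norm of the Jacobian Df(x) of the bare bones map f is at most 2; consequently f is Lipschitz on ℝ₊² with Lipschitz constant at most 2 in the ℓ∞ norm. -/

import Mathlib

open ContinuousLinearMap

private lemma row_bound (a b c γ : ℝ) (ha : 0 < a) (hb : 0 ≤ b) (hc : 0 ≤ c)
    (hγ0 : 0 < γ) (hγ1 : γ < 1) :
    |2*a*(a+γ*c)/(a+b+γ*c)^2| + |(-(2*a*γ*b))/(a+b+γ*c)^2| ≤ 2 := by
  have hD : (0:ℝ) < a + b + γ * c := by positivity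
  have h1 : |2*a*(a+γ*c)/(a+b+γ*c)^2| = 2*a*(a+γ*c)/(a+b+γ*c)^2 := by
    apply abs_of_nonneg; positivity
  have h2 : |(-(2*a*γ*b))/(a+b+γ*c)^2| = 2*a*γ*b/(a+b+γ*c)^2 := by
    rw [abs_div, abs_neg, abs_of_nonneg (by positivity), abs_of_nonneg (by positivity)]
  rw [h1, h2, ← add_div, div_le_iff₀ (by positivity)]
  nlinarith [mul_nonneg hγ0.le hb, mul_nonneg hγ0.le hc, mul_pos hγ0 hD,
    mul_nonneg hb hc, sq_nonneg b, sq_nonneg c, mul_lt_of_lt_one_left hD hγ1]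

private lemma row_apply_bound (c1 c2 : ℝ) (v : ℝ × ℝ) (h : |c1| + |c2| ≤ 2) :
    |c1 * v.1 + c2 * v.2| ≤ 2 * ‖v‖ := by
  have hv1 : |v.1| ≤ ‖v‖ := by
    simpa [Real.norm_eq_abs] using norm_fst_le v
  have hv2 : |v.2| ≤ ‖v‖ := by
    simpa [Real.norm_eq_abs] using norm_snd_le v
  have hv : 0 ≤ ‖v‖ := norm_nonneg v
  calc |c1 * v.1 + c2 * v.2| ≤ |c1 * v.1| + |c2 * v.2| := abs_add_le _ _
    _ = |c1| * |v.1| + |c2| * |v.2| := by rw [abs_mul, abs_mul]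
    _ ≤ 2 * ‖v‖ := by nlinarith [abs_nonneg c1, abs_nonneg c2]



theorem jacobian_bound_and_lipschitz
    (a1 a2 γ : ℝ) (ha1 : 0 < a1) (ha2 : 0 < a2) (hγ0 : 0 < γ) (hγ1 : γ < 1)
    (f : ℝ × ℝ → ℝ × ℝ)
    (hf : ∀ x : ℝ × ℝ,
      f x = (2 * x.1 * a1 / (a1 + x.1 + γ * x.2),
             2 * x.2 * a2 / (a2 + γ * x.1 + x.2))) :
    (∀ x : ℝ × ℝ, 0 ≤ x.1 → 0 ≤ x.2 → ‖fderiv ℝ f x‖ ≤ 2) ∧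
    LipschitzOnWith 2 f {p : ℝ × ℝ | 0 ≤ p.1 ∧ 0 ≤ p.2} := by
  -- explicit derivative
  set F := ContinuousLinearMap.fst ℝ ℝ ℝ
  set S := ContinuousLinearMap.snd ℝ ℝ ℝ
  have key : ∀ x : ℝ × ℝ, 0 ≤ x.1 → 0 ≤ x.2 →
      HasFDerivAt f
        ((((2*a1*(a1+γ*x.2))/(a1+x.1+γ*x.2)^2) • F +
          (-(2*a1*γ*x.1)/(a1+x.1+γ*x.2)^2) • S).prod
         (((-(2*a2*γ*x.2))/(a2+γ*x.1+x.2)^2) • F +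
          ((2*a2*(a2+γ*x.1))/(a2+γ*x.1+x.2)^2) • S)) x := by
    intro x h1 h2
    have hD1 : (0:ℝ) < a1 + x.1 + γ * x.2 := by positivity
    have hD2 : (0:ℝ) < a2 + γ * x.1 + x.2 := by positivity
    have e : f = fun x : ℝ × ℝ => (2 * x.1 * a1 / (a1 + x.1 + γ * x.2),
             2 * x.2 * a2 / (a2 + γ * x.1 + x.2)) := funext hf
    rw [e]
    have hN1 : HasFDerivAt (fun x : ℝ × ℝ => 2 * x.1 * a1) ((2*a1) • F) x := by
      have := (hasFDerivAt_fst (𝕜 := ℝ) (p := x)).const_mul (2:ℝ)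
      have := this.mul_const a1
      refine this.congr_fderiv ?_
      ext v <;> simp [F, mul_comm, mul_assoc, mul_left_comm]
    have hDen1 : HasFDerivAt (fun x : ℝ × ℝ => a1 + x.1 + γ * x.2) (F + γ • S) x := by
      have h := ((hasFDerivAt_const a1 x).add (hasFDerivAt_fst)).add
        ((hasFDerivAt_snd (𝕜 := ℝ) (p := x)).const_mul γ)
      refine h.congr_fderiv ?_
      ext v <;> simp [F, S]
    have hN2 : HasFDerivAt (fun x : ℝ × ℝ => 2 * x.2 * a2) ((2*a2) • S) x := by
      have := ((hasFDerivAt_snd (𝕜 := ℝ) (p := x)).const_mul (2:ℝ)).mul_const a2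
      refine this.congr_fderiv ?_
      ext v <;> simp [S, mul_comm, mul_assoc, mul_left_comm]
    have hDen2 : HasFDerivAt (fun x : ℝ × ℝ => a2 + γ * x.1 + x.2) (γ • F + S) x := by
      have h := ((hasFDerivAt_const a2 x).add
        ((hasFDerivAt_fst (𝕜 := ℝ) (p := x)).const_mul γ)).add hasFDerivAt_snd
      refine h.congr_fderiv ?_
      ext v <;> simp [F, S]
    have hi1 : HasFDerivAt (fun y : ℝ × ℝ => (a1 + y.1 + γ * y.2)⁻¹)
        ((-((a1 + x.1 + γ * x.2)^2)⁻¹) • (F + γ • S)) x :=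
      (hasDerivAt_inv hD1.ne').comp_hasFDerivAt x hDen1
    have hi2 : HasFDerivAt (fun y : ℝ × ℝ => (a2 + γ * y.1 + y.2)⁻¹)
        ((-((a2 + γ * x.1 + x.2)^2)⁻¹) • (γ • F + S)) x :=
      (hasDerivAt_inv hD2.ne').comp_hasFDerivAt x hDen2
    have h1' := hN1.mul hi1
    have h2' := hN2.mul hi2
    simp only [div_eq_mul_inv]
    have hp := h1'.prodMk h2'
    refine hp.congr_fderiv ?_
    congr 1
    · ext v <;>
      · simp only [ContinuousLinearMap.add_apply, ContinuousLinearMap.smul_apply,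
          ContinuousLinearMap.sub_apply, smul_eq_mul, ContinuousLinearMap.coe_fst',
          ContinuousLinearMap.coe_snd', ContinuousLinearMap.comp_apply,
          ContinuousLinearMap.inl_apply, ContinuousLinearMap.inr_apply, F, S]
        field_simp
        ring
    · ext v <;>
      · simp only [ContinuousLinearMap.add_apply, ContinuousLinearMap.smul_apply,
          ContinuousLinearMap.sub_apply, smul_eq_mul, ContinuousLinearMap.coe_fst',
          ContinuousLinearMap.coe_snd', ContinuousLinearMap.comp_apply,
          ContinuousLinearMap.inl_apply, ContinuousLinearMap.inr_apply, F, S]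
        field_simp
        ring
  have hbnd : ∀ x : ℝ × ℝ, 0 ≤ x.1 → 0 ≤ x.2 → ‖fderiv ℝ f x‖ ≤ 2 := by
    intro x h1 h2
    rw [(key x h1 h2).fderiv]
    apply ContinuousLinearMap.opNorm_le_bound _ (by norm_num)
    intro v
    rw [ContinuousLinearMap.prod_apply, Prod.norm_def]
    apply max_le
    · simp only [ContinuousLinearMap.add_apply, ContinuousLinearMap.smul_apply,
        ContinuousLinearMap.coe_fst', ContinuousLinearMap.coe_snd', smul_eq_mul,
        Real.norm_eq_abs, F, S]
      exact row_apply_bound _ _ v (by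
        simpa using row_bound a1 x.1 x.2 γ ha1 h1 h2 hγ0 hγ1)
    · simp only [ContinuousLinearMap.add_apply, ContinuousLinearMap.smul_apply,
        ContinuousLinearMap.coe_fst', ContinuousLinearMap.coe_snd', smul_eq_mul,
        Real.norm_eq_abs, F, S]
      have h := row_bound a2 x.2 x.1 γ ha2 h2 h1 hγ0 hγ1
      have := row_apply_bound (-(2*a2*γ*x.2)/(a2+γ*x.1+x.2)^2)
        (2*a2*(a2+γ*x.1)/(a2+γ*x.1+x.2)^2) v (by
          rw [add_comm]
          convert h using 3 <;> ring_nf)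
      convert this using 2 <;> ring
  refine ⟨hbnd, ?_⟩
  have hconv : Convex ℝ {p : ℝ × ℝ | 0 ≤ p.1 ∧ 0 ≤ p.2} := by
    have : {p : ℝ × ℝ | 0 ≤ p.1 ∧ 0 ≤ p.2} = Set.Ici (0 : ℝ × ℝ) := by
      ext p; simp [Prod.le_def]
    rw [this]; exact convex_Ici _
  exact Convex.lipschitzOnWith_of_nnnorm_fderiv_le
    (fun x hx => (key x hx.1 hx.2).differentiableAt)
    (fun x hx => by
      rw [← NNReal.coe_le_coe, coe_nnnorm]
      exact_mod_cast hbnd x hx.1 hx.2) hconv
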